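/- Let d, r be integers with 0 < r ≤ d and set n = d + r. The matrix A = (x_1,…,x_n) ∈ Γ_n^d defined by x_i = 1 for 1 ≤ i ≤ ⌊(d+r)/2⌋ and x_i = r+1 otherwise satisfies per(A) = C(d−r, ⌊(d−r)/2⌋) · (⌊(d+r)/2⌋)! · (⌈(d+r)/2⌉)!, where C(·,·) denotes the binomial coefficient; in particular A attains the maximum permanent over Γ_n^d, i.e., A ∈ M_n^d. -/

import Mathlib

/-- The permanent of an `n × n` matrix: `per(A) = ∑_{σ ∈ S_n} ∏_i A i (σ i)`. -/
def permanent {n : ℕ}  (A : Matrix (Fin n) (Fin n) ℕ) : ℕ :=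
  ∑ σ : Equiv.Perm (Fin n), ∏ i, A i (σ i)

/-- The `(0,1)`-matrix determined by the configuration `x` (1-indexed starting columns):
entry `(i,j)` (with `j : Fin n` representing column `j+1`) is `1` iff
`x i ≤ j+1 ≤ x i + d - 1`. -/
def confMatrix (n d : ℕ) (x : Fin n → ℕ) : Matrix (Fin n) (Fin n) ℕ :=
  fun i j => if x i ≤ (j : ℕ) + 1 ∧ (j : ℕ) + 1 ≤ x i + d - 1 then 1 else 0

/-- A valid configuration for `Γ_n^d`: `1 ≤ x i ≤ n - d + 1` for all `i`. -/
def ValidConf (n d : ℕ) (x : Fin n → ℕ) : Prop :=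
  ∀ i, 1 ≤ x i ∧ x i ≤ n - d + 1

/-- Membership in `Γ_n^d`: the set of `n × n` `(0,1)`-matrices each of whose rows has
exactly `d` ones forming a contiguous block. -/
def IsGamma (n d : ℕ) (A : Matrix (Fin n) (Fin n) ℕ) : Prop :=
  ∃ x : Fin n → ℕ, ValidConf n d x ∧ A = confMatrix n d x

/-- The configuration with `x_i = 1` for `1 ≤ i ≤ ⌊(d+r)/2⌋` and `x_i = r + 1` otherwise. -/
def optConf (d r : ℕ) : Fin (d + r) → ℕ :=
  fun i => if (i : ℕ) + 1 ≤ (d + r) / 2 then 1 else r + 1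

open Finset Equiv

namespace OptPerm

/-- The interval condition on a permutation. -/
def Pred {n : ℕ} (d : ℕ) (x : Fin n → ℕ) (σ : Equiv.Perm (Fin n)) : Prop :=
  ∀ j, x j ≤ (σ j : ℕ) + 1 ∧ (σ j : ℕ) + 1 ≤ x j + d - 1

instance {n d : ℕ} (x : Fin n → ℕ) : DecidablePred (Pred d x) :=
  fun _ => inferInstanceAs (Decidable (∀ _, _ ∧ _))

/-- Number of permutations satisfying the interval condition. -/
def cnt {n : ℕ} (d : ℕ) (x : Fin n → ℕ) : ℕ :=
  (univ.filter (Pred d x)).card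

lemma permanent_eq_cnt {n : ℕ} (d : ℕ) (x : Fin n → ℕ) :
    permanent (confMatrix n d x) = cnt d x := by
  unfold permanent confMatrix cnt
  rw [Finset.card_filter]
  refine Finset.sum_congr rfl fun σ _ => ?_
  rw [Finset.prod_boole]
  congr 1
  simp only [eq_iff_iff]
  constructor
  · intro h j; exact h j (mem_univ j)
  · intro h j _; exact h j

lemma card_filter_lt {n k : ℕ} (h : k ≤ n) :
    (univ.filter fun j : Fin n => (j : ℕ) < k).card = k := by
  have := Finset.card_bij' (s := univ.filter fun j : Fin n => (j : ℕ) < k)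
    (t := (univ : Finset (Fin k)))
    (i := fun j hj => ⟨(j : ℕ), by simpa using hj⟩)
    (j := fun a _ => ⟨(a : ℕ), lt_of_lt_of_le a.isLt h⟩)
    (by intros; simp) (by intro a _; simp [a.isLt])
    (by intros a ha; simp) (by intros a ha; simp)
  simpa using this

lemma asc_lemma (r : ℕ) (g : ℕ → ℕ)
    (hconv : ∀ v, 2 ≤ v → v ≤ r → 2 * g v ≤ g (v - 1) + g (v + 1)) :
    ∀ k w, 1 ≤ w → w + k ≤ r → g w ≤ g (w + 1) → g (w + k) ≤ g (w + k + 1) := by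
  intro k
  induction k with
  | zero => intro w _ _ h3; simpa using h3
  | succ k ih =>
    intro w h1 h2 h3
    have hk := ih w h1 (by omega) h3
    have hc := hconv (w + k + 1) (by omega) (by omega)
    have e1 : w + k + 1 - 1 = w + k := by omega
    rw [e1] at hc
    have : w + (k+1) = w + k + 1 := by omega
    rw [this]
    omega

lemma chain_lemma (r : ℕ) (g : ℕ → ℕ)
    (hconv : ∀ v, 2 ≤ v → v ≤ r → 2 * g v ≤ g (v - 1) + g (v + 1)) :
    ∀ k w, 1 ≤ w → w + k ≤ r + 1 → g w ≤ g (w + 1) → g w ≤ g (w + k) := by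
  intro k
  induction k with
  | zero => intro w _ _ _; simp
  | succ k ih =>
    intro w h1 h2 h3
    have h4 := ih w h1 (by omega) h3
    have h5 : g (w + k) ≤ g (w + k + 1) :=
      asc_lemma r g hconv k w h1 (by omega) h3
    show g w ≤ g (w + k + 1)
    omega

lemma convex_endpoint (r : ℕ) (g : ℕ → ℕ)
    (hconv : ∀ v, 2 ≤ v → v ≤ r → 2 * g v ≤ g (v - 1) + g (v + 1)) :
    ∀ v, 1 ≤ v → v ≤ r + 1 → g v ≤ max (g 1) (g (r + 1)) := by
  intro v h1 h2
  rcases eq_or_ne v (r+1) with rfl | hne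
  · exact le_max_right _ _
  have hvr : v ≤ r := by omega
  rcases le_or_gt (g v) (g (v + 1)) with h | h
  · have := chain_lemma r g hconv (r + 1 - v) v h1 (by omega) h
    rw [show v + (r + 1 - v) = r + 1 by omega] at this
    exact le_trans this (le_max_right _ _)
  · rcases eq_or_ne v 1 with rfl | hne1
    · exact le_max_left _ _
    have h2v : 2 ≤ v := by omega
    have hstep : g v ≤ g (v - 1) := by
      have := hconv v h2v hvr; omega
    -- reflected sequence
    set g' : ℕ → ℕ := fun w => g (r + 2 - w) with hg'
    have hconv' : ∀ w, 2 ≤ w → w ≤ r → 2 * g' w ≤ g' (w - 1) + g' (w + 1) := by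
      intro w hw2 hwr
      have e1 : r + 2 - (w - 1) = (r + 2 - w) + 1 := by omega
      have e2 : r + 2 - (w + 1) = (r + 2 - w) - 1 := by omega
      simp only [hg', e1, e2]
      have := hconv (r + 2 - w) (by omega) (by omega)
      omega
    have key : g' (r + 2 - v) ≤ g' (r + 2 - v + 1) := by
      have e : r + 2 - (r + 2 - v + 1) = v - 1 := by omega
      have e2 : r + 2 - (r + 2 - v) = v := by omega
      simp only [hg', e, e2]
      exact hstep
    have := chain_lemma r g' hconv' (r + 1 - (r + 2 - v)) (r + 2 - v) (by omega) (by omega) key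
    rw [show r + 2 - v + (r + 1 - (r + 2 - v)) = r + 1 by omega] at this
    have e3 : g' (r + 2 - v) = g v := by simp only [hg']; congr 1; omega
    have e4 : g' (r + 1) = g 1 := by simp only [hg']; congr 1; omega
    rw [e3, e4] at this
    exact le_trans this (le_max_left _ _)

lemma swap_count {n : ℕ} (d : ℕ) (x y : Fin n → ℕ) (i b c : Fin n)
    (hbc : b ≠ c)
    (hagree : ∀ j, j ≠ i → y j = x j)
    (hyi : y i ≤ (c : ℕ) + 1 ∧ (c : ℕ) + 1 ≤ y i + d - 1)
    (hmove : ∀ j, j ≠ i → x j ≤ (c : ℕ) + 1 → (c : ℕ) + 1 ≤ x j + d - 1 →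
      x j ≤ (b : ℕ) + 1 ∧ (b : ℕ) + 1 ≤ x j + d - 1) :
    (univ.filter fun σ : Equiv.Perm (Fin n) => Pred d x σ ∧ σ i = b).card ≤
    (univ.filter fun τ : Equiv.Perm (Fin n) => Pred d y τ ∧ τ i = c).card := by
  set F : Equiv.Perm (Fin n) → Equiv.Perm (Fin n) :=
    fun σ => σ * Equiv.swap i (σ.symm c) with hF
  have hFinv : ∀ σ : Equiv.Perm (Fin n), σ i = b → (F σ) * Equiv.swap i ((F σ).symm b) = σ := by
    intro σ hib
    have hii' : σ.symm c ≠ i := by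
      intro h
      apply hbc
      rw [← hib, ← h, Equiv.apply_symm_apply]
    have h1 : (F σ) (σ.symm c) = b := by
      simp only [hF, Equiv.Perm.mul_apply]
      rw [Equiv.swap_apply_right, hib]
    have h2 : (F σ).symm b = σ.symm c := by
      rw [Equiv.symm_apply_eq, h1]
    rw [h2, hF, mul_assoc, Equiv.swap_mul_self, mul_one]
  apply Finset.card_le_card_of_injOn F
  · intro σ hσ
    simp only [Finset.mem_coe, mem_filter, mem_univ, true_and] at hσ ⊢
    obtain ⟨hP, hib⟩ := hσ
    have hii' : σ.symm c ≠ i := by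
      intro h; apply hbc; rw [← hib, ← h, Equiv.apply_symm_apply]
    have hFi : (F σ) i = c := by
      simp only [hF, Equiv.Perm.mul_apply, Equiv.swap_apply_left, Equiv.apply_symm_apply]
    refine ⟨fun j => ?_, hFi⟩
    rcases eq_or_ne j i with rfl | hji
    · rw [hFi]; exact hyi
    · rw [hagree j hji]
      rcases eq_or_ne j (σ.symm c) with rfl | hji'
      · have hFj : (F σ) (σ.symm c) = b := by
          simp only [hF, Equiv.Perm.mul_apply]
          rw [Equiv.swap_apply_right, hib]
        rw [hFj]
        have hc := hP (σ.symm c)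
        rw [Equiv.apply_symm_apply] at hc
        exact hmove _ hji hc.1 hc.2
      · have hFj : (F σ) j = σ j := by
          simp only [hF, Equiv.Perm.mul_apply]
          rw [Equiv.swap_apply_of_ne_of_ne hji hji']
        rw [hFj]; exact hP j
  · intro σ₁ h₁ σ₂ h₂ heq
    simp only [coe_filter, Set.mem_setOf_eq, mem_univ, true_and] at h₁ h₂
    have e1 := hFinv σ₁ h₁.2
    have e2 := hFinv σ₂ h₂.2
    rw [← e1, ← e2, heq]

lemma cnt_convex (d r : ℕ) (hrd : r ≤ d) (x : Fin (d + r) → ℕ)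
    (hx : ∀ j, 1 ≤ x j ∧ x j ≤ r + 1) (i : Fin (d + r)) (v : ℕ)
    (h2 : 2 ≤ v) (hvr : v ≤ r) :
    2 * cnt d (Function.update x i v) ≤
      cnt d (Function.update x i (v - 1)) + cnt d (Function.update x i (v + 1)) := by
  have hd2 : 2 ≤ d := le_trans (le_trans h2 hvr) hrd
  set xv := Function.update x i v with hxv
  set xm := Function.update x i (v - 1) with hxm
  set xp := Function.update x i (v + 1) with hxp
  have hvagree : ∀ j, j ≠ i → xv j = x j := fun j hj => Function.update_of_ne hj _ _
  have hmagree : ∀ j, j ≠ i → xm j = x j := fun j hj => Function.update_of_ne hj _ _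
  have hpagree : ∀ j, j ≠ i → xp j = x j := fun j hj => Function.update_of_ne hj _ _
  have hvi : xv i = v := Function.update_self _ _ _
  have hmi : xm i = v - 1 := Function.update_self _ _ _
  have hpi : xp i = v + 1 := Function.update_self _ _ _
  obtain ⟨bm, hbmv⟩ : ∃ b : Fin (d + r), (b : ℕ) = v - 1 := ⟨⟨v - 1, by omega⟩, rfl⟩
  obtain ⟨cm, hcmv⟩ : ∃ b : Fin (d + r), (b : ℕ) = v - 2 := ⟨⟨v - 2, by omega⟩, rfl⟩
  obtain ⟨bp, hbpv⟩ : ∃ b : Fin (d + r), (b : ℕ) = v + d - 2 := ⟨⟨v + d - 2, by omega⟩, rfl⟩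
  obtain ⟨cp, hcpv⟩ : ∃ b : Fin (d + r), (b : ℕ) = v + d - 1 := ⟨⟨v + d - 1, by omega⟩, rfl⟩
  set Sv := univ.filter (Pred d xv) with hSv
  set Sm := univ.filter (Pred d xm) with hSm
  set Sp := univ.filter (Pred d xp) with hSp
  have split1 : (Sv.filter fun σ => σ i = bm).card + (Sv.filter fun σ => ¬(σ i = bm)).card = Sv.card :=
    Finset.card_filter_add_card_filter_not _
  have split2 : (Sv.filter fun σ => σ i = bp).card + (Sv.filter fun σ => ¬(σ i = bp)).card = Sv.card :=
    Finset.card_filter_add_card_filter_not _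
  have splitm : (Sm.filter fun σ => σ i = cm).card + (Sm.filter fun σ => ¬(σ i = cm)).card = Sm.card :=
    Finset.card_filter_add_card_filter_not _
  have splitp : (Sp.filter fun σ => σ i = cp).card + (Sp.filter fun σ => ¬(σ i = cp)).card = Sp.card :=
    Finset.card_filter_add_card_filter_not _
  have claimA : (Sv.filter fun σ => σ i = bm).card ≤ (Sm.filter fun σ => σ i = cm).card := by
    rw [hSv, hSm, Finset.filter_filter, Finset.filter_filter]
    apply swap_count d xv xm i bm cm
    · intro h; rw [Fin.ext_iff, hbmv, hcmv] at h; omega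
    · intro j hj; rw [hmagree j hj, hvagree j hj]
    · rw [hmi, hcmv]; constructor <;> omega
    · intro j hj hc1 hc2
      rw [hvagree j hj] at hc1 hc2 ⊢
      have := (hx j).1
      rw [hcmv] at hc1 hc2
      rw [hbmv]
      constructor <;> omega
  have claimB : (Sv.filter fun σ => σ i = bp).card ≤ (Sp.filter fun σ => σ i = cp).card := by
    rw [hSv, hSp, Finset.filter_filter, Finset.filter_filter]
    apply swap_count d xv xp i bp cp
    · intro h; rw [Fin.ext_iff, hbpv, hcpv] at h; omega
    · intro j hj; rw [hpagree j hj, hvagree j hj]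
    · rw [hpi, hcpv]; constructor <;> omega
    · intro j hj hc1 hc2
      rw [hvagree j hj] at hc1 hc2 ⊢
      have h1 := (hx j).1
      have h2 := (hx j).2
      rw [hcpv] at hc1 hc2
      rw [hbpv]
      constructor <;> omega
  have claimC : (Sv.filter fun σ => ¬(σ i = bm)).card ≤ (Sp.filter fun σ => ¬(σ i = cp)).card := by
    apply Finset.card_le_card
    intro σ hσ
    simp only [hSv, hSp, Finset.mem_filter, Finset.mem_univ, true_and] at hσ ⊢
    obtain ⟨hP, hne⟩ := hσ
    have hPi := hP i
    rw [hvi] at hPi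
    have hvalne : (σ i : ℕ) ≠ v - 1 := by
      intro h; exact hne (by rw [Fin.ext_iff, hbmv]; exact h)
    constructor
    · intro j
      rcases eq_or_ne j i with rfl | hj
      · rw [hpi]; omega
      · rw [hpagree j hj]
        have := hP j; rw [hvagree j hj] at this; exact this
    · intro h; rw [Fin.ext_iff, hcpv] at h; omega
  have claimD : (Sv.filter fun σ => ¬(σ i = bp)).card ≤ (Sm.filter fun σ => ¬(σ i = cm)).card := by
    apply Finset.card_le_card
    intro σ hσ
    simp only [hSv, hSm, Finset.mem_filter, Finset.mem_univ, true_and] at hσ ⊢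
    obtain ⟨hP, hne⟩ := hσ
    have hPi := hP i
    rw [hvi] at hPi
    have hvalne : (σ i : ℕ) ≠ v + d - 2 := by
      intro h; exact hne (by rw [Fin.ext_iff, hbpv]; exact h)
    constructor
    · intro j
      rcases eq_or_ne j i with rfl | hj
      · rw [hmi]; omega
      · rw [hmagree j hj]
        have := hP j; rw [hvagree j hj] at this; exact this
    · intro h; rw [Fin.ext_iff, hcmv] at h; omega
  show 2 * Sv.card ≤ Sm.card + Sp.card
  omega

/-- Glue two subtype equivalences into a permutation. -/
def glue {n : ℕ} (A S : Finset (Fin n))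
    (e₁ : {i // i ∈ A} ≃ {j // j ∈ S}) (e₂ : {i // i ∉ A} ≃ {j // j ∉ S}) :
    Equiv.Perm (Fin n) :=
  ((Equiv.sumCompl (· ∈ A)).symm.trans ((e₁.sumCongr e₂).trans (Equiv.sumCompl (· ∈ S))))

lemma glue_pos {n : ℕ} (A S : Finset (Fin n)) (e₁ : {i // i ∈ A} ≃ {j // j ∈ S})
    (e₂ : {i // i ∉ A} ≃ {j // j ∉ S}) (a : Fin n) (ha : a ∈ A) :
    glue A S e₁ e₂ a = (e₁ ⟨a, ha⟩ : Fin n) := by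
  simp only [glue, Equiv.trans_apply, Equiv.sumCompl_symm_apply_of_pos ha,
    Equiv.sumCongr_apply, Sum.map_inl, Equiv.sumCompl_apply_inl]

lemma glue_neg {n : ℕ} (A S : Finset (Fin n)) (e₁ : {i // i ∈ A} ≃ {j // j ∈ S})
    (e₂ : {i // i ∉ A} ≃ {j // j ∉ S}) (a : Fin n) (ha : a ∉ A) :
    glue A S e₁ e₂ a = (e₂ ⟨a, ha⟩ : Fin n) := by
  simp only [glue, Equiv.trans_apply, Equiv.sumCompl_symm_apply_of_neg ha,
    Equiv.sumCongr_apply, Sum.map_inr, Equiv.sumCompl_apply_inr]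

/-- The subtype of permutations with prescribed image of `A` is equivalent to a product. -/
def permImageEquiv {n : ℕ} (A S : Finset (Fin n)) (h : S.card = A.card) :
    {σ : Equiv.Perm (Fin n) // A.image σ = S} ≃
      ({i // i ∈ A} ≃ {j // j ∈ S}) × ({i // i ∉ A} ≃ {j // j ∉ S}) where
  toFun := fun ⟨σ, hσ⟩ =>
    ( Equiv.subtypeEquiv σ (fun a => by
        constructor
        · intro ha; rw [← hσ]; exact Finset.mem_image_of_mem _ ha
        · intro hs; rw [← hσ] at hs
          obtain ⟨a', ha', he⟩ := Finset.mem_image.mp hs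
          rwa [← σ.injective he]),
      Equiv.subtypeEquiv σ (fun a => by
        constructor
        · intro ha hs; apply ha; rw [← hσ] at hs
          obtain ⟨a', ha', he⟩ := Finset.mem_image.mp hs
          rwa [← σ.injective he]
        · intro hs ha; exact hs (hσ ▸ Finset.mem_image_of_mem _ ha)) )
  invFun := fun ⟨e₁, e₂⟩ =>
    ⟨glue A S e₁ e₂, by
      apply Finset.eq_of_subset_of_card_le
      · intro j hj
        obtain ⟨a, ha, he⟩ := Finset.mem_image.mp hj
        rw [← he, glue_pos A S e₁ e₂ a ha]
        exact (e₁ ⟨a, ha⟩).2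
      · rw [h, Finset.card_image_of_injective _ (glue A S e₁ e₂).injective]⟩
  left_inv := by
    rintro ⟨σ, hσ⟩
    ext a : 3
    simp only [Equiv.coe_fn_mk]
    by_cases ha : a ∈ A
    · rw [glue_pos A S _ _ a ha]; rfl
    · rw [glue_neg A S _ _ a ha]; rfl
  right_inv := by
    rintro ⟨e₁, e₂⟩
    have h1 : ∀ a : {i // i ∈ A}, glue A S e₁ e₂ a = (e₁ a : Fin n) :=
      fun a => glue_pos A S e₁ e₂ a a.2
    have h2 : ∀ a : {i // i ∉ A}, glue A S e₁ e₂ a = (e₂ a : Fin n) :=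
      fun a => glue_neg A S e₁ e₂ a a.2
    refine Prod.ext ?_ ?_
    · ext a
      simp only [Equiv.subtypeEquiv_apply]
      exact congrArg Fin.val (h1 a)
    · ext a
      simp only [Equiv.subtypeEquiv_apply]
      exact congrArg Fin.val (h2 a)

lemma card_perm_image_eq {n : ℕ} (A S : Finset (Fin n)) (h : S.card = A.card) :
    (univ.filter fun σ : Equiv.Perm (Fin n) => A.image σ = S).card
      = A.card.factorial * (n - A.card).factorial := by
  rw [← Fintype.card_subtype]
  rw [Fintype.card_congr (permImageEquiv A S h)]
  rw [Fintype.card_prod]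
  have c1 : Fintype.card {i // i ∈ A} = A.card := Fintype.card_coe _
  have c2 : Fintype.card {j // j ∈ S} = A.card := by rw [Fintype.card_coe]; exact h
  have c3 : Fintype.card {i // i ∉ A} = n - A.card := by
    rw [Fintype.card_subtype_compl, Fintype.card_fin, Fintype.card_coe]
  have c4 : Fintype.card {j // j ∉ S} = n - A.card := by
    rw [Fintype.card_subtype_compl, Fintype.card_fin, Fintype.card_coe, h]
  rw [Fintype.card_equiv (Fintype.equivOfCardEq (c1.trans c2.symm)),
      Fintype.card_equiv (Fintype.equivOfCardEq (c3.trans c4.symm)), c1, c3]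

lemma count_block {n : ℕ} (A C₁ C₂ : Finset (Fin n)) (hcompl : ∀ j, j ∉ C₂ → j ∈ C₁) :
    (univ.filter fun σ : Equiv.Perm (Fin n) =>
        (∀ i ∈ A, σ i ∈ C₁) ∧ (∀ i ∉ A, σ i ∈ C₂)).card
      = (univ.filter fun S : Finset (Fin n) =>
          S.card = A.card ∧ (∀ j, j ∉ C₂ → j ∈ S) ∧ S ⊆ C₁).card
        * A.card.factorial * (n - A.card).factorial := by
  set 𝒮 := univ.filter fun S : Finset (Fin n) =>
      S.card = A.card ∧ (∀ j, j ∉ C₂ → j ∈ S) ∧ S ⊆ C₁ with h𝒮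
  -- key: for σ, cond σ ↔ image σ A ∈ 𝒮
  have key : ∀ σ : Equiv.Perm (Fin n),
      ((∀ i ∈ A, σ i ∈ C₁) ∧ (∀ i ∉ A, σ i ∈ C₂)) ↔ A.image σ ∈ 𝒮 := by
    intro σ
    rw [h𝒮, mem_filter]
    constructor
    · rintro ⟨hc1, hc2⟩
      refine ⟨mem_univ _, Finset.card_image_of_injective _ σ.injective, ?_, ?_⟩
      · intro j hj
        have hmem : σ.symm j ∈ A := by
          by_contra hna
          exact hj (by simpa using hc2 _ hna)
        rw [Finset.mem_image]
        exact ⟨σ.symm j, hmem, by simp⟩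
      · intro j hj
        obtain ⟨a, ha, he⟩ := Finset.mem_image.mp hj
        rw [← he]; exact hc1 a ha
    · rintro ⟨_, hcard, hsup, hsub⟩
      constructor
      · intro i hi; exact hsub (Finset.mem_image_of_mem _ hi)
      · intro i hi
        by_contra hnc
        have : σ i ∈ A.image σ := hsup _ hnc
        obtain ⟨a, ha, he⟩ := Finset.mem_image.mp this
        exact hi (by rwa [← σ.injective he])
  have hfib : ∀ σ ∈ (univ.filter fun σ : Equiv.Perm (Fin n) =>
      (∀ i ∈ A, σ i ∈ C₁) ∧ (∀ i ∉ A, σ i ∈ C₂)), A.image σ ∈ 𝒮 := by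
    intro σ hσ
    rw [mem_filter] at hσ
    exact (key σ).mp hσ.2
  rw [Finset.card_eq_sum_card_fiberwise hfib]
  have heach : ∀ S ∈ 𝒮, ((univ.filter fun σ : Equiv.Perm (Fin n) =>
      (∀ i ∈ A, σ i ∈ C₁) ∧ (∀ i ∉ A, σ i ∈ C₂)).filter fun σ : Equiv.Perm (Fin n) => Finset.image (⇑σ) A = S).card
      = A.card.factorial * (n - A.card).factorial := by
    intro S hS
    rw [Finset.filter_filter]
    have hSc : S.card = A.card := by
      rw [h𝒮, mem_filter] at hS; exact hS.2.1
    rw [← card_perm_image_eq A S hSc]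
    congr 1
    apply Finset.filter_congr
    intro σ _
    constructor
    · rintro ⟨_, h2⟩; exact h2
    · intro h2
      exact ⟨(key σ).mpr (h2 ▸ hS), h2⟩
  rw [Finset.sum_congr rfl heach, Finset.sum_const, smul_eq_mul, mul_assoc]

lemma card_S (d r t : ℕ) (hrd : r ≤ d) (hrt : r ≤ t) (htd : t ≤ d) :
    (univ.filter fun S : Finset (Fin (d + r)) =>
        S.card = t ∧ (∀ j : Fin (d + r), j ∉ (univ.filter fun j : Fin (d + r) => r ≤ (j : ℕ)) → j ∈ S)
          ∧ S ⊆ (univ.filter fun j : Fin (d + r) => (j : ℕ) < d)).card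
      = (d - r).choose (t - r) := by
  set L : Finset (Fin (d + r)) := univ.filter fun j => (j : ℕ) < r with hL
  set M : Finset (Fin (d + r)) := univ.filter fun j => r ≤ (j : ℕ) ∧ (j : ℕ) < d with hM
  have hLcard : L.card = r := card_filter_lt (by omega)
  have hLM : Disjoint L M := by
    apply Finset.disjoint_left.mpr
    intro j hjL hjM
    simp only [hL, Finset.mem_filter, Finset.mem_univ, true_and] at hjL
    simp only [hM, Finset.mem_filter, Finset.mem_univ, true_and] at hjM
    omega
  have hMcard : M.card = d - r := by
    have hunion : L ∪ M = univ.filter fun j : Fin (d + r) => (j : ℕ) < d := by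
      ext j
      simp only [hL, hM, Finset.mem_union, Finset.mem_filter, Finset.mem_univ, true_and]
      omega
    have := Finset.card_union_of_disjoint hLM
    rw [hunion, card_filter_lt (by omega : d ≤ d + r), hLcard] at this
    omega
  have hmemL : ∀ j : Fin (d + r),
      (j ∉ (univ.filter fun j : Fin (d + r) => r ≤ (j : ℕ))) ↔ j ∈ L := by
    intro j
    simp only [hL, Finset.mem_filter, Finset.mem_univ, true_and]
    omega
  rw [show (d - r).choose (t - r) = (Finset.powersetCard (t - r) M).card from by
    rw [Finset.card_powersetCard, hMcard]]
  apply Finset.card_bij' (i := fun S _ => S \ L) (j := fun T _ => T ∪ L)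
  · intro S hS
    simp only [Finset.mem_filter, Finset.mem_univ, true_and] at hS
    obtain ⟨hc, hsup, hsub⟩ := hS
    rw [Finset.mem_powersetCard]
    constructor
    · intro j hj
      rw [Finset.mem_sdiff] at hj
      have := hsub hj.1
      simp only [Finset.mem_filter, Finset.mem_univ, true_and] at this
      simp only [hM, hL, Finset.mem_filter, Finset.mem_univ, true_and]
      have : j ∉ L := hj.2
      simp only [hL, Finset.mem_filter, Finset.mem_univ, true_and] at this
      constructor
      · omega
      · simpa using hsub hj.1
    · have hLS : L ⊆ S := by
        intro j hj
        simp only [hL, Finset.mem_filter, Finset.mem_univ, true_and] at hj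
        exact hsup j (by omega)
      rw [Finset.card_sdiff_of_subset hLS, hc, hLcard]
  · intro T hT
    rw [Finset.mem_powersetCard] at hT
    obtain ⟨hsub, hc⟩ := hT
    have hdisj : Disjoint T L := by
      apply Finset.disjoint_left.mpr
      intro j hjT hjL
      have := hsub hjT
      simp only [hM, Finset.mem_filter, Finset.mem_univ, true_and] at this
      simp only [hL, Finset.mem_filter, Finset.mem_univ, true_and] at hjL
      omega
    simp only [Finset.mem_filter, Finset.mem_univ, true_and]
    refine ⟨?_, ?_, ?_⟩
    · rw [Finset.card_union_of_disjoint hdisj, hc, hLcard]; omega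
    · intro j hj
      apply Finset.mem_union_right
      simp only [hL, Finset.mem_filter, Finset.mem_univ, true_and]
      omega
    · intro j hj
      rcases Finset.mem_union.mp hj with h | h
      · have := hsub h
        simp only [hM, Finset.mem_filter, Finset.mem_univ, true_and] at this
        simp only [Finset.mem_filter, Finset.mem_univ, true_and]
        omega
      · simp only [hL, Finset.mem_filter, Finset.mem_univ, true_and] at h
        simp only [Finset.mem_filter, Finset.mem_univ, true_and]
        omega
  · intro S hS
    simp only [Finset.mem_filter, Finset.mem_univ, true_and] at hS
    have hLS : L ⊆ S := by
      intro j hj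
      simp only [hL, Finset.mem_filter, Finset.mem_univ, true_and] at hj
      exact hS.2.1 j (by omega)
    exact Finset.sdiff_union_of_subset hLS
  · intro T hT
    rw [Finset.mem_powersetCard] at hT
    have hdisj : Disjoint T L := by
      apply Finset.disjoint_left.mpr
      intro j hjT hjL
      have := hT.1 hjT
      simp only [hM, Finset.mem_filter, Finset.mem_univ, true_and] at this
      simp only [hL, Finset.mem_filter, Finset.mem_univ, true_and] at hjL
      omega
    rw [Finset.union_sdiff_distrib, Finset.sdiff_self, Finset.union_empty,
      Finset.sdiff_eq_self_of_disjoint hdisj]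

lemma pred_twoval (d r : ℕ) (hr : 0 < r) (hrd : r ≤ d) (x : Fin (d + r) → ℕ)
    (hx2 : ∀ j, x j = 1 ∨ x j = r + 1) (σ : Equiv.Perm (Fin (d + r))) :
    Pred d x σ ↔
      ((∀ i ∈ (univ.filter fun i => x i = 1), σ i ∈ (univ.filter fun j : Fin (d + r) => (j : ℕ) < d)) ∧
       (∀ i ∉ (univ.filter fun i => x i = 1), σ i ∈ (univ.filter fun j : Fin (d + r) => r ≤ (j : ℕ)))) := by
  have hd1 : 1 ≤ d := le_trans hr hrd
  constructor
  · intro hP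
    constructor
    · intro i hi
      simp only [Finset.mem_filter, Finset.mem_univ, true_and] at hi ⊢
      have := hP i
      rw [hi] at this
      omega
    · intro i hi
      simp only [Finset.mem_filter, Finset.mem_univ, true_and] at hi ⊢
      have hxi : x i = r + 1 := (hx2 i).resolve_left hi
      have := hP i
      rw [hxi] at this
      omega
  · rintro ⟨h1, h2⟩ i
    rcases hx2 i with hx1 | hxr
    · have := h1 i (by simp [hx1])
      simp only [Finset.mem_filter, Finset.mem_univ, true_and] at this
      rw [hx1]
      omega
    · have hnot : i ∉ univ.filter fun i => x i = 1 := by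
        simp only [Finset.mem_filter, Finset.mem_univ, true_and]
        omega
      have := h2 i hnot
      simp only [Finset.mem_filter, Finset.mem_univ, true_and] at this
      have hub : (σ i : ℕ) < d + r := (σ i).isLt
      rw [hxr]
      omega

lemma cnt_twoval (d r : ℕ) (hr : 0 < r) (hrd : r ≤ d) (x : Fin (d + r) → ℕ)
    (hx2 : ∀ j, x j = 1 ∨ x j = r + 1)
    (hrt : r ≤ (univ.filter fun i => x i = 1).card)
    (htd : (univ.filter fun i => x i = 1).card ≤ d) :
    cnt d x = (d - r).choose ((univ.filter fun i => x i = 1).card - r)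
      * ((univ.filter fun i => x i = 1).card).factorial
      * (d + r - (univ.filter fun i => x i = 1).card).factorial := by
  unfold cnt
  have hfe : univ.filter (Pred d x) =
      univ.filter fun σ : Equiv.Perm (Fin (d + r)) =>
        ((∀ i ∈ (univ.filter fun i => x i = 1), σ i ∈ (univ.filter fun j : Fin (d + r) => (j : ℕ) < d)) ∧
         (∀ i ∉ (univ.filter fun i => x i = 1), σ i ∈ (univ.filter fun j : Fin (d + r) => r ≤ (j : ℕ)))) := by
    apply Finset.filter_congr
    intro σ _
    exact pred_twoval d r hr hrd x hx2 σ
  rw [hfe, count_block _ _ _ (by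
    intro j hj
    simp only [Finset.mem_filter, Finset.mem_univ, true_and] at hj ⊢
    omega), card_S d r _ hrd hrt htd]

lemma cnt_twoval_zero (d r : ℕ) (hr : 0 < r) (hrd : r ≤ d) (x : Fin (d + r) → ℕ)
    (hx2 : ∀ j, x j = 1 ∨ x j = r + 1)
    (hout : (univ.filter fun i => x i = 1).card < r ∨ d < (univ.filter fun i => x i = 1).card) :
    cnt d x = 0 := by
  unfold cnt
  rw [Finset.card_eq_zero, Finset.filter_eq_empty_iff]
  intro σ _ hP
  rw [pred_twoval d r hr hrd x hx2 σ] at hP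
  obtain ⟨h1, h2⟩ := hP
  set A := univ.filter fun i => x i = 1 with hA
  rcases hout with hlt | hgt
  · -- L := cols < r injects into A via σ.symm
    have : (univ.filter fun j : Fin (d + r) => (j : ℕ) < r).card ≤ A.card := by
      apply Finset.card_le_card_of_injOn (fun j => σ.symm j)
      · intro j hj
        simp only [Finset.mem_coe, Finset.mem_filter, Finset.mem_univ, true_and] at hj
        by_contra hna
        have := h2 _ hna
        simp only [Finset.mem_filter, Finset.mem_univ, true_and, Equiv.apply_symm_apply] at this
        omega
      · intro a _ b _ hab
        exact σ.symm.injective hab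
    rw [card_filter_lt (by omega)] at this
    omega
  · -- A injects into cols < d via σ
    have : A.card ≤ (univ.filter fun j : Fin (d + r) => (j : ℕ) < d).card := by
      apply Finset.card_le_card_of_injOn (fun i => σ i)
      · intro i hi
        exact h1 i hi
      · intro a _ b _ hab
        exact σ.injective hab
    rw [card_filter_lt (by omega)] at this
    omega

lemma arith_step (d r t : ℕ) (hr : 0 < r) (hrd : r ≤ d) (hrt : r ≤ t)
    (hup : t + 1 ≤ (d + r) / 2) :
    (d - r).choose (t - r) * t.factorial * (d + r - t).factorial
      ≤ (d - r).choose (t + 1 - r) * (t + 1).factorial * (d + r - (t + 1)).factorial := by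
  have htd : t < d := by omega
  have key : (t - r + 1) * (d + r - t) ≤ (d - t) * (t + 1) := by
    have h2t : 2 * t + 2 ≤ d + r := by omega
    zify [hrt, le_of_lt htd, (by omega : t ≤ d + r)]
    nlinarith [hr, hrt, htd]
  refine Nat.le_of_mul_le_mul_left ?_ (show 0 < t - r + 1 by omega)
  have e1 : t + 1 - r = (t - r) + 1 := by omega
  have echoose : (d - r).choose ((t - r) + 1) * ((t - r) + 1) = (d - r).choose (t - r) * (d - r - (t - r)) :=
    Nat.choose_succ_right_eq _ _
  have e2 : d - r - (t - r) = d - t := by omega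
  rw [e2] at echoose
  have e3 : (d + r - t) = (d + r - (t + 1)) + 1 := by omega
  have e4 : (d + r - t).factorial = ((d + r - t - 1) + 1).factorial := by rw [show d + r - t - 1 + 1 = d + r - t by omega]
  -- LHS * (t-r+1)
  calc (t - r + 1) * ((d - r).choose (t - r) * t.factorial * (d + r - t).factorial)
      = (d - r).choose (t - r) * t.factorial * ((d + r - (t + 1)).factorial * ((t - r + 1) * (d + r - t))) := by
        rw [e3, Nat.factorial_succ]
        ring
    _ ≤ (d - r).choose (t - r) * t.factorial * ((d + r - (t + 1)).factorial * ((d - t) * (t + 1))) := by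
        apply Nat.mul_le_mul_left
        apply Nat.mul_le_mul_left
        exact key
    _ = (t - r + 1) * ((d - r).choose (t + 1 - r) * (t + 1).factorial * (d + r - (t + 1)).factorial) := by
        rw [e1, Nat.factorial_succ]
        calc (d - r).choose (t - r) * t.factorial * ((d + r - (t + 1)).factorial * ((d - t) * (t + 1)))
            = ((d - r).choose (t - r) * (d - t)) * ((t + 1) * t.factorial) * (d + r - (t + 1)).factorial := by ring
          _ = ((d - r).choose (t - r + 1) * (t - r + 1)) * ((t + 1) * t.factorial) * (d + r - (t + 1)).factorial := by rw [echoose]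
          _ = (t - r + 1) * ((d - r).choose (t - r + 1) * ((t + 1) * t.factorial) * (d + r - (t + 1)).factorial) := by ring

lemma arith_sym (d r t : ℕ) (hr : 0 < r) (hrd : r ≤ d) (hrt : r ≤ t) (htd : t ≤ d) :
    (d - r).choose (t - r) * t.factorial * (d + r - t).factorial
      = (d - r).choose ((d + r - t) - r) * (d + r - t).factorial * (d + r - (d + r - t)).factorial := by
  have e1 : d + r - t - r = d - t := by omega
  have e2 : d + r - (d + r - t) = t := by omega
  have e3 : (d - r).choose (t - r) = (d - r).choose (d - t) := by
    rw [show d - t = (d - r) - (t - r) by omega]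
    exact (Nat.choose_symm (by omega)).symm
  rw [e1, e2, e3]
  ring

lemma arith_max (d r t : ℕ) (hr : 0 < r) (hrd : r ≤ d) (hrt : r ≤ t) (htd : t ≤ d) :
    (d - r).choose (t - r) * t.factorial * (d + r - t).factorial
      ≤ (d - r).choose ((d + r) / 2 - r) * ((d + r) / 2).factorial
          * (d + r - (d + r) / 2).factorial := by
  set m := (d + r) / 2 with hm
  have hrm : r ≤ m := by omega
  have hmd : m ≤ d := by omega
  -- ascending chain up to m
  have up : ∀ k t', r ≤ t' → t' + k = m →
      (d - r).choose (t' - r) * t'.factorial * (d + r - t').factorial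
        ≤ (d - r).choose (m - r) * m.factorial * (d + r - m).factorial := by
    intro k
    induction k with
    | zero => intro t' _ h; rw [show t' = m by omega]
    | succ k ih =>
      intro t' h1 h2
      calc (d - r).choose (t' - r) * t'.factorial * (d + r - t').factorial
          ≤ (d - r).choose (t' + 1 - r) * (t' + 1).factorial * (d + r - (t' + 1)).factorial :=
            arith_step d r t' hr hrd h1 (by omega)
        _ ≤ _ := ih (t' + 1) (by omega) (by omega)
  rcases le_or_gt t m with h | h
  · exact up (m - t) t hrt (by omega)
  · rw [arith_sym d r t hr hrd hrt htd]
    exact up (m - (d + r - t)) (d + r - t) (by omega) (by omega)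

lemma optConf_card (d r : ℕ) (hr : 0 < r) :
    (univ.filter fun i => optConf d r i = 1).card = (d + r) / 2 := by
  have he : (univ.filter fun i => optConf d r i = 1)
      = (univ.filter fun i : Fin (d + r) => (i : ℕ) < (d + r) / 2) := by
    apply Finset.filter_congr
    intro i _
    unfold optConf
    split <;> rename_i h <;> constructor <;> intro hc <;> omega
  rw [he, card_filter_lt (by omega)]

lemma cnt_optConf (d r : ℕ) (hr : 0 < r) (hrd : r ≤ d) :
    cnt d (optConf d r) = (d - r).choose ((d + r) / 2 - r) * ((d + r) / 2).factorial
          * (d + r - (d + r) / 2).factorial := by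
  have hx2 : ∀ j, optConf d r j = 1 ∨ optConf d r j = r + 1 := by
    intro j; unfold optConf; split <;> simp
  have hc := optConf_card d r hr
  rw [cnt_twoval d r hr hrd _ hx2 (by omega) (by omega), hc]

lemma cnt_le_opt (d r : ℕ) (hr : 0 < r) (hrd : r ≤ d) (x : Fin (d + r) → ℕ)
    (hx : ∀ j, 1 ≤ x j ∧ x j ≤ r + 1) :
    cnt d x ≤ cnt d (optConf d r) := by
  suffices H : ∀ k (x : Fin (d + r) → ℕ), (∀ j, 1 ≤ x j ∧ x j ≤ r + 1) →
      (univ.filter fun i => x i ≠ 1 ∧ x i ≠ r + 1).card = k →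
      cnt d x ≤ cnt d (optConf d r) by
    exact H _ x hx rfl
  intro k
  induction k using Nat.strong_induction_on with
  | _ k ih =>
    intro x hx hk
    rcases Nat.eq_zero_or_pos k with rfl | hpos
    · -- two-valued configuration
      have hx2 : ∀ j, x j = 1 ∨ x j = r + 1 := by
        intro j
        by_contra hc
        push_neg at hc
        have hmem : j ∈ univ.filter fun i => x i ≠ 1 ∧ x i ≠ r + 1 := by
          simp only [Finset.mem_filter, Finset.mem_univ, true_and]
          exact hc
        rw [Finset.card_eq_zero] at hk
        rw [hk] at hmem
        exact absurd hmem (Finset.notMem_empty j)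
      set t := (univ.filter fun i => x i = 1).card with ht
      rcases le_or_gt r t with h1 | h1
      · rcases le_or_gt t d with h2 | h2
        · rw [cnt_twoval d r hr hrd x hx2 (by omega) (by omega),
            cnt_optConf d r hr hrd]
          exact arith_max d r t hr hrd h1 h2
        · rw [cnt_twoval_zero d r hr hrd x hx2 (Or.inr h2)]
          exact Nat.zero_le _
      · rw [cnt_twoval_zero d r hr hrd x hx2 (Or.inl h1)]
        exact Nat.zero_le _
    · -- there is a non-extreme coordinate
      have hne : (univ.filter fun i => x i ≠ 1 ∧ x i ≠ r + 1).Nonempty := by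
        rw [← Finset.card_pos, hk]; exact hpos
      obtain ⟨i, hi⟩ := hne
      simp only [Finset.mem_filter, Finset.mem_univ, true_and] at hi
      have hxi := hx i
      have h2v : 2 ≤ x i := by omega
      have hvr : x i ≤ r := by omega
      have hupd : Function.update x i (x i) = x := Function.update_eq_self i x
      have hend := convex_endpoint r (fun w => cnt d (Function.update x i w))
        (fun w hw2 hwr => cnt_convex d r hrd x hx i w hw2 hwr) (x i) (by omega) (by omega)
      simp only [hupd] at hend
      have hclaim : ∀ w, (w = 1 ∨ w = r + 1) →
          cnt d (Function.update x i w) ≤ cnt d (optConf d r) := by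
        intro w hw
        have hvalid : ∀ j, 1 ≤ Function.update x i w j ∧ Function.update x i w j ≤ r + 1 := by
          intro j
          rcases eq_or_ne j i with rfl | hj
          · rw [Function.update_self]; omega
          · rw [Function.update_of_ne hj]; exact hx j
        have hsub : (univ.filter fun j => Function.update x i w j ≠ 1 ∧ Function.update x i w j ≠ r + 1)
            ⊆ (univ.filter fun j => x j ≠ 1 ∧ x j ≠ r + 1).erase i := by
          intro j hj
          simp only [Finset.mem_filter, Finset.mem_univ, true_and] at hj
          rcases eq_or_ne j i with rfl | hne
          · rw [Function.update_self] at hj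
            rcases hw with rfl | rfl
            · exact absurd rfl hj.1
            · exact absurd rfl hj.2
          · rw [Function.update_of_ne hne] at hj
            apply Finset.mem_erase.mpr
            refine ⟨hne, ?_⟩
            simp only [Finset.mem_filter, Finset.mem_univ, true_and]
            exact hj
        have hcard : (univ.filter fun j => Function.update x i w j ≠ 1 ∧ Function.update x i w j ≠ r + 1).card < k := by
          calc (univ.filter fun j => Function.update x i w j ≠ 1 ∧ Function.update x i w j ≠ r + 1).card
              ≤ ((univ.filter fun j => x j ≠ 1 ∧ x j ≠ r + 1).erase i).card := Finset.card_le_card hsub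
            _ = k - 1 := by
                rw [Finset.card_erase_of_mem (by
                  simp only [Finset.mem_filter, Finset.mem_univ, true_and]; exact hi), hk]
            _ < k := by omega
        exact ih _ hcard _ hvalid rfl
      calc cnt d x ≤ max (cnt d (Function.update x i 1)) (cnt d (Function.update x i (r + 1))) := hend
        _ ≤ cnt d (optConf d r) :=
            max_le (hclaim 1 (Or.inl rfl)) (hclaim (r + 1) (Or.inr rfl))

end OptPerm

open OptPerm in
theorem opt_conf_attains_max (d r : ℕ) (hr : 0 < r) (hrd : r ≤ d) :
    IsGamma (d + r) d (confMatrix (d + r) d (optConf d r)) ∧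
    permanent (confMatrix (d + r) d (optConf d r)) =
      Nat.choose (d - r) ((d - r) / 2) * ((d + r) / 2).factorial *
        ((d + r + 1) / 2).factorial ∧
    ∀ B : Matrix (Fin (d + r)) (Fin (d + r)) ℕ, IsGamma (d + r) d B →
      permanent B ≤ permanent (confMatrix (d + r) d (optConf d r)) := by
  have hval : ValidConf (d + r) d (optConf d r) := by
    intro i
    unfold optConf
    split <;> omega
  refine ⟨⟨optConf d r, hval, rfl⟩, ?_, ?_⟩
  · rw [permanent_eq_cnt, cnt_optConf d r hr hrd]
    have h1 : (d + r) / 2 - r = (d - r) / 2 := by omega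
    have h2 : d + r - (d + r) / 2 = (d + r + 1) / 2 := by omega
    rw [h1, h2]
  · rintro B ⟨x, hvx, rfl⟩
    rw [permanent_eq_cnt, permanent_eq_cnt]
    apply cnt_le_opt d r hr hrd
    intro j
    have := hvx j
    constructor
    · exact this.1
    · have : x j ≤ d + r - d + 1 := this.2
      omega
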